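/- For n ≥ 1, the unsigned Stirling number of the first kind satisfies s(n,3) = ((n−1)!/2)·(H_{n−1}² − ζ_{n−1}(2)), where H_{n−1} = ∑_{j=1}^{n−1} 1/j and ζ_{n−1}(2) = ∑_{j=1}^{n−1} 1/j². -/

import Mathlib

open Finset

def stirling1 : ℕ → ℕ → ℕ
  | 0, 0 => 1
  | 0, _ + 1 => 0
  | _ + 1, 0 => 0
  | n + 1, k + 1 => n * stirling1 n (k + 1) + stirling1 n k

noncomputable def H (n : ℕ) : ℝ := ∑ j ∈ Icc 1 n, (1 : ℝ) / j

noncomputable def zp (k n : ℕ) : ℝ := ∑ j ∈ Icc 1 n, (1 : ℝ) / (j : ℝ) ^ k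

noncomputable def hzeta (s : ℕ) (a : ℝ) : ℝ := ∑' n : ℕ, 1 / ((n + 1 : ℝ) + a) ^ s

noncomputable def Z (s : ℕ) : ℝ := ∑' n : ℕ, 1 / ((n + 1 : ℝ)) ^ s

lemma H_succ (n : ℕ) : H (n + 1) = H n + 1 / (n + 1 : ℝ) := by
  simp [H, Finset.sum_Icc_succ_top (Nat.one_le_iff_ne_zero.mpr (Nat.succ_ne_zero n))]

lemma zp_succ (k n : ℕ) : zp k (n + 1) = zp k n + 1 / ((n + 1 : ℝ)) ^ k := by
  simp [zp, Finset.sum_Icc_succ_top (Nat.one_le_iff_ne_zero.mpr (Nat.succ_ne_zero n))]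

lemma s1 (n : ℕ) (hn : 1 ≤ n) :
    (stirling1 n 1 : ℝ) = (Nat.factorial (n - 1) : ℝ) := by
  induction n with
  | zero => omega
  | succ m ih =>
    rcases Nat.eq_zero_or_pos m with h | h
    · subst h; simp [stirling1]
    · have := ih h
      obtain ⟨p, rfl⟩ : ∃ p, m = p + 1 := ⟨m - 1, by omega⟩
      simp only [Nat.add_sub_cancel] at *
      have key : stirling1 (p + 2) 1 = (p + 1) * stirling1 (p + 1) 1 + stirling1 (p + 1) 0 := rfl
      rw [key]
      push_cast
      rw [this, Nat.factorial_succ]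
      have : stirling1 (p + 1) 0 = 0 := rfl
      rw [this]
      push_cast
      ring

lemma s2 (n : ℕ) (hn : 1 ≤ n) :
    (stirling1 n 2 : ℝ) = (Nat.factorial (n - 1) : ℝ) * H (n - 1) := by
  induction n with
  | zero => omega
  | succ m ih =>
    rcases Nat.eq_zero_or_pos m with h | h
    · subst h; simp [stirling1, H]
    · have h2 := ih h
      have h1 := s1 m h
      obtain ⟨p, rfl⟩ : ∃ p, m = p + 1 := ⟨m - 1, by omega⟩
      simp only [Nat.add_sub_cancel] at *
      have key : stirling1 (p + 2) 2 = (p + 1) * stirling1 (p + 1) 2 + stirling1 (p + 1) 1 := rfl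
      rw [key]
      push_cast
      rw [h1, h2, Nat.factorial_succ, H_succ]
      push_cast
      have : (p : ℝ) + 1 ≠ 0 := by positivity
      field_simp

theorem stmt5 (n : ℕ) (hn : 1 ≤ n) :
    (stirling1 n 3 : ℝ) =
      (Nat.factorial (n - 1) : ℝ) / 2 * ((H (n - 1)) ^ 2 - zp 2 (n - 1)) := by
  induction n with
  | zero => omega
  | succ m ih =>
    rcases Nat.eq_zero_or_pos m with h | h
    · subst h; simp [stirling1, H, zp]
    · have h3 := ih h
      have h2 := s2 m h
      obtain ⟨p, rfl⟩ : ∃ p, m = p + 1 := ⟨m - 1, by omega⟩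
      simp only [Nat.add_sub_cancel] at *
      have key : stirling1 (p + 2) 3 = (p + 1) * stirling1 (p + 1) 3 + stirling1 (p + 1) 2 := rfl
      rw [key]
      push_cast
      rw [h2, h3, Nat.factorial_succ, H_succ, zp_succ]
      push_cast
      have hne : (p : ℝ) + 1 ≠ 0 := by positivity
      field_simp
      ring
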